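/- Characterization of the service rate region of the single-parity-check system: a nonnegative vector λ = (λ_1,…,λ_k) belongs to S_k(k+1,k) if and only if λ_i + λ_j ≤ 2 for all distinct i, j ∈ [k], and for every subset A ⊆ [k], k·Σ_{j∈A}(λ_j − 1) + Σ_{j∈[k]\A} λ_j ≤ k + 1 − |A|. -/

import Mathlib

open Matrix

/-- `R ⊆ [n]` is a recovery set for object `j` under generator matrix `G`:
the standard basis vector `e_j` lies in the span of the columns of `G` indexed by `R`,
and minimally so. -/
def IsRecoverySet {F : Type*} [Field F] {k n : ℕ} (G : Matrix (Fin k) (Fin n) F)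
    (j : Fin k) (R : Finset (Fin n)) : Prop :=
  (Pi.single j 1 : Fin k → F) ∈ Submodule.span F (Gᵀ '' (R : Set (Fin n))) ∧
    ∀ S : Finset (Fin n), S ⊂ R →
      (Pi.single j 1 : Fin k → F) ∉ Submodule.span F (Gᵀ '' (S : Set (Fin n)))

/-- A valid allocation of request rates `lam` to recovery sets: nonnegative weights
`w j R` supported on recovery sets, summing to `lam j` for each object `j`, and
loading each server `l` by at most its unit capacity. -/
def IsValidAllocation {F : Type*} [Field F] {k n : ℕ} (G : Matrix (Fin k) (Fin n) F)
    (lam : Fin k → ℝ) (w : Fin k → Finset (Fin n) → ℝ) : Prop :=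
  (∀ j R, 0 ≤ w j R) ∧
  (∀ j R, ¬ IsRecoverySet G j R → w j R = 0) ∧
  (∀ j, ∑ R : Finset (Fin n), w j R = lam j) ∧
  (∀ l : Fin n, ∑ j : Fin k, ∑ R ∈ Finset.univ.filter (fun R : Finset (Fin n) => l ∈ R),
      w j R ≤ 1)

/-- The service rate region of `G`. -/
def ServiceRegion {F : Type*} [Field F] {k n : ℕ} (G : Matrix (Fin k) (Fin n) F) :
    Set (Fin k → ℝ) :=
  {lam | (∀ j, 0 ≤ lam j) ∧ ∃ w, IsValidAllocation G lam w}

/-- `Gmat M i` = the `k × n` matrix formed by the `i` leftmost (systematic) columns of `M`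
followed by the `n - i` rightmost (parity) columns of `M`. -/
def Gmat {F : Type*} [Field F] {k n : ℕ} (M : Matrix (Fin k) (Fin (k + n)) F) (i : ℕ) :
    Matrix (Fin k) (Fin n) F :=
  Matrix.of fun r l =>
    if (l : ℕ) < i then M r ⟨(l : ℕ), by have := l.isLt; omega⟩
    else M r ⟨k + (l : ℕ), by have := l.isLt; omega⟩


lemma sum_le_sum_support {α : Type*} [DecidableEq α] {A B : Finset α} {f : α → ℝ}
    (hf : ∀ x, 0 ≤ f x) (h : ∀ x ∈ A, f x ≠ 0 → x ∈ B) :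
    ∑ x ∈ A, f x ≤ ∑ x ∈ B, f x := by
  have h1 : ∑ x ∈ A ∩ B, f x = ∑ x ∈ A, f x :=
    Finset.sum_subset Finset.inter_subset_left (fun x hx hx' => by
      by_contra hne
      exact hx' (Finset.mem_inter.mpr ⟨hx, h x hx hne⟩))
  rw [← h1]
  exact Finset.sum_le_sum_of_subset_of_nonneg Finset.inter_subset_right (fun x _ _ => hf x)

lemma sum_two_ite {β : Type*} [Fintype β] [DecidableEq β] {A B : β} (hAB : A ≠ B) (a b : ℝ) :
    ∑ R : β, (if R = A then a else if R = B then b else 0) = a + b := by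
  have key : ∀ R : β, (if R = A then a else if R = B then b else 0)
      = (if R = A then a else 0) + (if R = B then b else 0) := by
    intro R
    by_cases h1 : R = A
    · subst h1; rw [if_pos rfl, if_pos rfl, if_neg hAB, add_zero]
    · rw [if_neg h1, if_neg h1, zero_add]
  rw [Finset.sum_congr rfl fun R _ => key R, Finset.sum_add_distrib,
    Finset.sum_ite_eq' Finset.univ A (fun _ => a), Finset.sum_ite_eq' Finset.univ B (fun _ => b),
    if_pos (Finset.mem_univ _), if_pos (Finset.mem_univ _)]

lemma sum_two_ite_filter {β : Type*} [Fintype β] [DecidableEq β] (P : β → Prop) [DecidablePred P]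
    {A B : β} (hAB : A ≠ B) (a b : ℝ) :
    ∑ R ∈ Finset.univ.filter P, (if R = A then a else if R = B then b else 0)
      = (if P A then a else 0) + (if P B then b else 0) := by
  have key : ∀ R : β, (if R = A then a else if R = B then b else 0)
      = (if R = A then a else 0) + (if R = B then b else 0) := by
    intro R
    by_cases h1 : R = A
    · subst h1; rw [if_pos rfl, if_pos rfl, if_neg hAB, add_zero]
    · rw [if_neg h1, if_neg h1, zero_add]
  rw [Finset.sum_congr rfl fun R _ => key R, Finset.sum_add_distrib,
    Finset.sum_ite_eq' _ A (fun _ => a), Finset.sum_ite_eq' _ B (fun _ => b)]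
  simp [Finset.mem_filter]

lemma lp_ineq {k a sA sC Y : ℝ} (hk : 2 ≤ k) (h1 : 1 ≤ a)
    (hsA : 0 ≤ sA) (hsC : 0 ≤ sC) (hsum : sA + sC = Y) (hY : Y ≤ 1) :
    k * (2 * sA - a * Y) + ((k - a) + 2 * sC - (k - a) * Y) ≤ k + 1 - a := by
  nlinarith [mul_nonneg (mul_nonneg (by linarith : (0:ℝ) ≤ a - 1)
      (by linarith : (0:ℝ) ≤ k - 1)) (by linarith : (0:ℝ) ≤ Y),
    mul_nonneg (by linarith : (0:ℝ) ≤ 2 * k - 2) (by linarith : (0:ℝ) ≤ Y - sA)]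

section Aux
variable {F : Type*} [Field F] {k : ℕ}

def pcol (M : Matrix (Fin k) (Fin (k + (k + 1))) F) : Fin k → F :=
  fun r => M r ⟨k + k, by omega⟩

variable {M : Matrix (Fin k) (Fin (k + (k + 1))) F}
variable (hsys : ∀ j : Fin k, ∀ r : Fin k,
      M r (Fin.castAdd (k + 1) j) = if r = j then (1 : F) else 0)

include hsys in
lemma col_castSucc (i : Fin k) :
    (Gmat M k : Matrix (Fin k) (Fin (k+1)) F)ᵀ i.castSucc = (Pi.single i 1 : Fin k → F) := by
  funext r
  have h1 : ((i.castSucc : Fin (k+1)) : ℕ) < k := by simp [i.isLt]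
  have h2 : (⟨((i.castSucc : Fin (k+1)) : ℕ), by omega⟩ : Fin (k + (k+1))) =
      Fin.castAdd (k+1) i := by
    apply Fin.ext; simp
  simp only [Matrix.transpose_apply, Gmat, Matrix.of_apply, if_pos h1]
  rw [h2, hsys, Pi.single_apply]

lemma col_last :
    (Gmat M k : Matrix (Fin k) (Fin (k+1)) F)ᵀ (Fin.last k) = pcol M := by
  funext r
  have h1 : ¬ (((Fin.last k : Fin (k+1)) : ℕ) < k) := by simp
  simp only [Matrix.transpose_apply, Gmat, Matrix.of_apply, if_neg h1, pcol]
  congr 1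

include hsys in
lemma eval_lin (c : Fin (k+1) → F) (x : Fin k) :
    (∑ l : Fin (k+1), c l • (Gmat M k : Matrix (Fin k) (Fin (k+1)) F)ᵀ l) x
      = c x.castSucc + c (Fin.last k) * pcol M x := by
  rw [Finset.sum_apply, Fin.sum_univ_castSucc]
  simp only [Pi.smul_apply, smul_eq_mul, col_castSucc hsys, col_last]
  congr 1
  have : ∀ i : Fin k, c i.castSucc * (Pi.single i 1 : Fin k → F) x
      = if x = i then c i.castSucc else 0 := by
    intro i; rw [Pi.single_apply]; split <;> simp
  rw [Finset.sum_congr rfl fun i _ => this i, Finset.sum_ite_eq,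
    if_pos (Finset.mem_univ x)]

variable (hMDS : ∀ S : Finset (Fin (k + (k + 1))), S.card = k →
      LinearIndependent F (fun l : S => Mᵀ (l : Fin (k + (k + 1)))))

include hsys hMDS in
lemma pcol_ne_zero (r : Fin k) : pcol M r ≠ 0 := by
  intro hpr
  set pidx : Fin (k + (k+1)) := ⟨k + k, by omega⟩ with hpidx
  set T : Finset (Fin (k + (k+1))) := (Finset.univ.erase r).image (Fin.castAdd (k+1)) with hT
  have hpT : pidx ∉ T := by
    simp only [hT, Finset.mem_image]
    rintro ⟨i, -, h⟩
    have : ((Fin.castAdd (k+1) i : Fin _) : ℕ) = k + k := congrArg Fin.val h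
    simp only [Fin.coe_castAdd] at this
    omega
  have hinj : Function.Injective (Fin.castAdd (k+1) : Fin k → Fin (k + (k+1))) :=
    fun a b h => Fin.ext (by simpa using congrArg Fin.val h)
  have hcardT : T.card = k - 1 := by
    rw [hT, Finset.card_image_of_injective _ hinj,
      Finset.card_erase_of_mem (Finset.mem_univ r), Finset.card_univ, Fintype.card_fin]
  have hcardS : (insert pidx T).card = k := by
    rw [Finset.card_insert_of_notMem hpT, hcardT]
    have : 0 < k := r.pos
    omega
  have li := (Fintype.linearIndependent_iff).mp (hMDS (insert pidx T) hcardS)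
  set g : Fin (k + (k+1)) → F := fun l => if h : (l : ℕ) < k then -(pcol M ⟨l, h⟩) else 1
    with hg
  have hMp : Mᵀ pidx = pcol M := by funext x; rfl
  have hMe : ∀ i : Fin k, Mᵀ (Fin.castAdd (k+1) i) = (Pi.single i 1 : Fin k → F) := by
    intro i; funext x
    rw [Matrix.transpose_apply, hsys, Pi.single_apply]
  have hgp : g pidx = 1 := by
    have hv : ((pidx : Fin (k + (k+1))) : ℕ) = k + k := rfl
    rw [hg]
    exact dif_neg (by rw [hv]; omega)
  have hge : ∀ i : Fin k, g (Fin.castAdd (k+1) i) = -(pcol M i) := by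
    intro i
    rw [hg]
    simp only [Fin.coe_castAdd]
    rw [dif_pos i.isLt]
  have hsum : ∑ i : (insert pidx T : Finset _), g i • Mᵀ (i : Fin _) = 0 := by
    rw [Finset.sum_coe_sort (insert pidx T) (fun l => g l • Mᵀ l),
      Finset.sum_insert hpT, hgp, one_smul, hMp, hT,
      Finset.sum_image (fun a _ b _ h => hinj h)]
    funext x
    simp only [Pi.add_apply, Finset.sum_apply, Pi.smul_apply, smul_eq_mul, Pi.zero_apply]
    have : ∀ i : Fin k, g (Fin.castAdd (k+1) i) * Mᵀ (Fin.castAdd (k+1) i) x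
        = if x = i then -(pcol M i) else 0 := by
      intro i
      rw [hge, hMe, Pi.single_apply]
      split <;> simp
    rw [Finset.sum_congr rfl fun i _ => this i, Finset.sum_ite_eq]
    by_cases hx : x = r
    · rw [if_neg (by simp [hx]), hx, hpr, add_zero]
    · rw [if_pos (by simp [hx]), add_neg_cancel]
  have := li (fun i => g i) hsum ⟨pidx, Finset.mem_insert_self _ _⟩
  rw [hgp] at this
  exact one_ne_zero this

include hsys hMDS in
lemma span_forces (j : Fin k) (R : Finset (Fin (k+1)))
    (hjR : j.castSucc ∉ R)
    (hmem : (Pi.single j 1 : Fin k → F) ∈ Submodule.span F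
      ((Gmat M k : Matrix (Fin k) (Fin (k+1)) F)ᵀ '' (R : Set (Fin (k+1)))))
    (m : Fin (k+1)) (hm : m ≠ j.castSucc) : m ∈ R := by
  by_contra hmR
  obtain ⟨c, hcsupp, hc⟩ := (Finsupp.mem_span_image_iff_linearCombination F).mp hmem
  have hc0 : ∀ l : Fin (k+1), l ∉ R → c l = 0 := by
    intro l hl
    by_contra hne
    exact hl (hcsupp (Finsupp.mem_support_iff.mpr hne))
  have hlin : (Finsupp.linearCombination F (Gmat M k : Matrix (Fin k) (Fin (k+1)) F)ᵀ) c
      = ∑ l : Fin (k+1), c l • (Gmat M k : Matrix (Fin k) (Fin (k+1)) F)ᵀ l := by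
    rw [show (Finsupp.linearCombination F (Gmat M k : Matrix (Fin k) (Fin (k+1)) F)ᵀ) c
        = c.sum fun i a => a • (Gmat M k : Matrix (Fin k) (Fin (k+1)) F)ᵀ i from
      Finsupp.linearCombination_apply .., Finsupp.sum_fintype]
    intro i; rw [zero_smul]
  have key : ∀ x : Fin k, (if x = j then (1:F) else 0)
      = c x.castSucc + c (Fin.last k) * pcol M x := by
    intro x
    have := congrFun hc x
    rw [hlin] at this
    rw [eval_lin hsys] at this
    rw [this, Pi.single_apply]
  have hcj : c j.castSucc = 0 := hc0 _ hjR
  by_cases hml : m = Fin.last k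
  · have hcl : c (Fin.last k) = 0 := hml ▸ hc0 m hmR
    have h1 := key j
    rw [if_pos rfl, hcj, hcl, zero_mul, add_zero] at h1
    exact one_ne_zero h1
  · have hmk : (m : ℕ) < k := by
      have h2 := m.isLt
      have h3 : (m : ℕ) ≠ k := fun h => hml (Fin.ext (by simp [h]))
      omega
    have hmi : m = (⟨(m : ℕ), hmk⟩ : Fin k).castSucc := Fin.ext (by simp)
    have hij : (⟨(m : ℕ), hmk⟩ : Fin k) ≠ j := fun h => hm (by rw [hmi, h])
    have hci : c (⟨(m : ℕ), hmk⟩ : Fin k).castSucc = 0 := by rw [← hmi]; exact hc0 m hmR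
    have h1 := key j
    rw [if_pos rfl, hcj, zero_add] at h1
    have h2 := key (⟨(m : ℕ), hmk⟩ : Fin k)
    rw [if_neg hij, hci, zero_add] at h2
    have hcl : c (Fin.last k) ≠ 0 := fun h => by
      rw [h, zero_mul] at h1; exact one_ne_zero h1
    rcases mul_eq_zero.mp h2.symm with h | h
    · exact hcl h
    · exact pcol_ne_zero hsys hMDS _ h

include hsys in
lemma isRecovery_single (j : Fin k) :
    IsRecoverySet (Gmat M k : Matrix (Fin k) (Fin (k+1)) F) j {j.castSucc} := by
  constructor
  · apply Submodule.subset_span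
    rw [Finset.coe_singleton]
    exact ⟨j.castSucc, rfl, col_castSucc hsys j⟩
  · intro S hS
    rw [Finset.ssubset_singleton_iff] at hS
    subst hS
    rw [Finset.coe_empty]
    rw [show ((Gmat M k : Matrix (Fin k) (Fin (k+1)) F)ᵀ '' (∅ : Set (Fin (k+1)))) = ∅ from
      Set.image_empty _, Submodule.span_empty, Submodule.mem_bot]
    intro h
    have := congrFun h j
    rw [Pi.single_eq_same] at this
    simp only [Pi.zero_apply] at this
    exact one_ne_zero this

include hsys hMDS in
lemma isRecovery_erase (t : Fin k) :
    IsRecoverySet (Gmat M k : Matrix (Fin k) (Fin (k+1)) F) t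
      (Finset.univ.erase t.castSucc) := by
  have hlast_mem : (Fin.last k) ∈ Finset.univ.erase t.castSucc := by
    refine Finset.mem_erase.mpr ⟨?_, Finset.mem_univ _⟩
    intro h
    have h2 := congrArg Fin.val h
    have h3 := t.isLt
    simp only [Fin.val_last, Fin.coe_castSucc] at h2
    omega
  constructor
  · have hpt := pcol_ne_zero hsys hMDS t
    have hid : (Pi.single t 1 : Fin k → F)
        = (pcol M t)⁻¹ • (Gmat M k : Matrix (Fin k) (Fin (k+1)) F)ᵀ (Fin.last k)
          + ∑ i ∈ Finset.univ.erase t,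
              (-((pcol M t)⁻¹ * pcol M i)) • (Gmat M k : Matrix (Fin k) (Fin (k+1)) F)ᵀ i.castSucc := by
      funext x
      simp only [Pi.add_apply, Pi.smul_apply, smul_eq_mul, Finset.sum_apply,
        col_last, col_castSucc hsys]
      have hterm : ∀ i ∈ Finset.univ.erase t,
          (-((pcol M t)⁻¹ * pcol M i)) * (Pi.single i 1 : Fin k → F) x
            = if x = i then -((pcol M t)⁻¹ * pcol M i) else 0 := by
        intro i _
        rw [Pi.single_apply]; split <;> simp
      rw [Finset.sum_congr rfl hterm, Finset.sum_ite_eq]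
      by_cases hx : x = t
      · subst hx
        rw [if_neg (by simp), add_zero, Pi.single_eq_same, inv_mul_cancel₀ hpt]
      · rw [if_pos (by simp [hx]), Pi.single_apply, if_neg hx, add_neg_cancel]
    rw [hid]
    refine Submodule.add_mem _
      (Submodule.smul_mem _ _ (Submodule.subset_span ⟨Fin.last k, hlast_mem, rfl⟩))
      (Submodule.sum_mem _ fun i hi => Submodule.smul_mem _ _
        (Submodule.subset_span ⟨i.castSucc, ?_, rfl⟩))
    have hit : i ≠ t := (Finset.mem_erase.mp hi).1
    exact Finset.mem_coe.mpr (Finset.mem_erase.mpr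
      ⟨fun h => hit (Fin.castSucc_inj.mp h), Finset.mem_univ _⟩)
  · intro S hS hmem
    obtain ⟨m, hmE, hmS⟩ := Finset.exists_of_ssubset hS
    have htS : t.castSucc ∉ S := fun h => ((Finset.mem_erase.mp (hS.subset h)).1 rfl)
    have hmne : m ≠ t.castSucc := (Finset.mem_erase.mp hmE).1
    exact hmS (span_forces hsys hMDS t S htS hmem m hmne)

end Aux


theorem spc_srr_characterization
    {F : Type*} [Field F] [Fintype F] {k : ℕ} (hk : 2 ≤ k)
    (hq : k + (k + 1) + 1 ≤ Fintype.card F)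
    (M : Matrix (Fin k) (Fin (k + (k + 1))) F)
    (hsys : ∀ j : Fin k, ∀ r : Fin k,
      M r (Fin.castAdd (k + 1) j) = if r = j then (1 : F) else 0)
    (hMDS : ∀ S : Finset (Fin (k + (k + 1))), S.card = k →
      LinearIndependent F (fun l : S => Mᵀ (l : Fin (k + (k + 1)))))
    (lam : Fin k → ℝ) (hlam0 : ∀ j, 0 ≤ lam j) :
    lam ∈ ServiceRegion (Gmat M k : Matrix (Fin k) (Fin (k + 1)) F) ↔
      ((∀ a b : Fin k, a ≠ b → lam a + lam b ≤ 2) ∧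
        ∀ A : Finset (Fin k),
          (k : ℝ) * (∑ j ∈ A, (lam j - 1)) + ∑ j ∈ Aᶜ, lam j ≤
            (k : ℝ) + 1 - (A.card : ℝ)) := by
  classical
  have hkR : (2:ℝ) ≤ (k:ℝ) := by exact_mod_cast hk
  have hlastne : ∀ j : Fin k, Fin.last k ≠ j.castSucc := by
    intro j h
    have h2 := congrArg Fin.val h
    simp only [Fin.val_last, Fin.coe_castSucc] at h2
    have := j.isLt; omega
  have hlastmem : ∀ j : Fin k, Fin.last k ∈ Finset.univ.erase j.castSucc := fun j =>
    Finset.mem_erase.mpr ⟨hlastne j, Finset.mem_univ _⟩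
  have hsingle_ne : ∀ j : Fin k,
      ({j.castSucc} : Finset (Fin (k+1))) ≠ Finset.univ.erase j.castSucc := by
    intro j h
    have hc := congrArg Finset.card h
    rw [Finset.card_singleton, Finset.card_erase_of_mem (Finset.mem_univ _),
      Finset.card_univ, Fintype.card_fin] at hc
    omega
  constructor
  · rintro ⟨-, w, hw0, hwsupp, hwsum, hwload⟩
    set x : Fin k → ℝ := fun j =>
      ∑ R ∈ Finset.univ.filter (fun R => j.castSucc ∈ R), w j R with hx
    set y : Fin k → ℝ := fun j =>
      ∑ R ∈ Finset.univ.filter (fun R => j.castSucc ∉ R), w j R with hy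
    have hy0 : ∀ j, 0 ≤ y j := fun j => Finset.sum_nonneg fun R _ => hw0 j R
    have hxy : ∀ j, x j + y j = lam j := fun j => by
      rw [hx, hy]
      dsimp only
      rw [Finset.sum_filter_add_sum_filter_not]
      exact hwsum j
    have hforce : ∀ j (R : Finset (Fin (k+1))), w j R ≠ 0 → j.castSucc ∉ R →
        ∀ m, m ≠ j.castSucc → m ∈ R := by
      intro j R hne hnotin m hm
      have hrec : IsRecoverySet (Gmat M k) j R := by
        by_contra h; exact hne (hwsupp j R h)
      exact span_forces hsys hMDS j R hnotin hrec.1 m hm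
    have hYle : ∑ j, y j ≤ 1 := by
      refine le_trans (Finset.sum_le_sum fun j _ => ?_) (hwload (Fin.last k))
      rw [hy]
      refine sum_le_sum_support (hw0 j) ?_
      intro R hR hne
      rw [Finset.mem_filter] at hR ⊢
      exact ⟨Finset.mem_univ _, hforce j R hne hR.2 _ (hlastne j)⟩
    have hK : ∀ i, lam i + (∑ j, y j) - 2 * y i ≤ 1 := by
      intro i
      have h1 : ∑ j, (if j = i then x i else y j)
          ≤ ∑ j, ∑ R ∈ Finset.univ.filter (fun R => i.castSucc ∈ R), w j R := by
        refine Finset.sum_le_sum fun j _ => ?_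
        by_cases hj : j = i
        · subst hj; rw [if_pos rfl, hx]
        · rw [if_neg hj, hy]
          refine sum_le_sum_support (hw0 j) ?_
          intro R hR hne
          rw [Finset.mem_filter] at hR ⊢
          refine ⟨Finset.mem_univ _, hforce j R hne hR.2 _ ?_⟩
          exact fun h => hj (Fin.castSucc_inj.mp h).symm
      have h2 : ∑ j, (if j = i then x i else y j) = (∑ j, y j) + (x i - y i) := by
        have key : ∀ j : Fin k, (if j = i then x i else y j)
            = y j + (if j = i then x i - y i else 0) := by
          intro j; by_cases hj : j = i
          · subst hj; rw [if_pos rfl, if_pos rfl]; ring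
          · rw [if_neg hj, if_neg hj, add_zero]
        rw [Finset.sum_congr rfl fun j _ => key j, Finset.sum_add_distrib,
          Finset.sum_ite_eq' Finset.univ i (fun _ => x i - y i), if_pos (Finset.mem_univ _)]
      have h3 := hwload i.castSucc
      have h4 := hxy i
      rw [h2] at h1
      linarith
    constructor
    · intro a b hab
      have hyab : y a + y b ≤ ∑ j, y j := by
        rw [← Finset.sum_pair hab]
        exact Finset.sum_le_sum_of_subset_of_nonneg (Finset.subset_univ _)
          (fun j _ _ => hy0 j)
      linarith [hK a, hK b]
    · intro A
      have hsA : 0 ≤ ∑ j ∈ A, y j := Finset.sum_nonneg fun j _ => hy0 j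
      have hsC : 0 ≤ ∑ j ∈ Aᶜ, y j := Finset.sum_nonneg fun j _ => hy0 j
      have hsplit : (∑ j ∈ A, y j) + (∑ j ∈ Aᶜ, y j) = ∑ j, y j :=
        Finset.sum_add_sum_compl A y
      have hA1 : ∑ j ∈ A, (lam j - 1) ≤ ∑ j ∈ A, (2 * y j - (∑ j, y j)) :=
        Finset.sum_le_sum fun j _ => by have := hK j; linarith
      have hA2 : ∑ j ∈ Aᶜ, lam j ≤ ∑ j ∈ Aᶜ, (1 + (2 * y j - (∑ j, y j))) :=
        Finset.sum_le_sum fun j _ => by have := hK j; linarith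
      have e1 : ∑ j ∈ A, (2 * y j - (∑ j, y j))
          = 2 * (∑ j ∈ A, y j) - (A.card : ℝ) * (∑ j, y j) := by
        rw [Finset.sum_sub_distrib, ← Finset.mul_sum, Finset.sum_const, nsmul_eq_mul]
      have e2 : ∑ j ∈ Aᶜ, (1 + (2 * y j - (∑ j, y j)))
          = (Aᶜ.card : ℝ) + (2 * (∑ j ∈ Aᶜ, y j) - (Aᶜ.card : ℝ) * (∑ j, y j)) := by
        rw [Finset.sum_add_distrib, Finset.sum_const, nsmul_eq_mul, mul_one,
          Finset.sum_sub_distrib, ← Finset.mul_sum, Finset.sum_const, nsmul_eq_mul]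
      have hcards : A.card + Aᶜ.card = k := by
        rw [Finset.card_add_card_compl, Fintype.card_fin]
      have hcardsR : (Aᶜ.card : ℝ) = (k : ℝ) - (A.card : ℝ) := by
        have : ((A.card + Aᶜ.card : ℕ) : ℝ) = (k : ℝ) := by exact_mod_cast hcards
        push_cast at this
        linarith
      by_cases hA : A = ∅
      · subst hA
        rw [Finset.sum_empty, mul_zero, zero_add, Finset.card_empty]
        rw [e2, hcardsR] at hA2
        simp only [Finset.card_empty, Nat.cast_zero, sub_zero] at hA2 hcardsR ⊢
        have hsC' : (∑ j ∈ (∅ : Finset (Fin k))ᶜ, y j) = ∑ j, y j := by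
          rw [Finset.compl_empty]
        have hY0 : (0:ℝ) ≤ ∑ j, y j :=
          Finset.sum_nonneg fun j _ => hy0 j
        nlinarith [mul_nonneg (by linarith : (0:ℝ) ≤ (k:ℝ) - 2) hY0]
      · have hcard1 : 1 ≤ A.card := Finset.card_pos.mpr (Finset.nonempty_of_ne_empty hA)
        have hcard1R : (1:ℝ) ≤ (A.card : ℝ) := by exact_mod_cast hcard1
        have hfin := lp_ineq (k := (k:ℝ)) (a := (A.card : ℝ)) (sA := ∑ j ∈ A, y j)
          (sC := ∑ j ∈ Aᶜ, y j) (Y := ∑ j, y j) hkR hcard1R hsA hsC hsplit hYle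
        rw [e1] at hA1
        rw [e2, hcardsR] at hA2
        have hmul : (k:ℝ) * (∑ j ∈ A, (lam j - 1))
            ≤ (k:ℝ) * (2 * (∑ j ∈ A, y j) - (A.card : ℝ) * (∑ j, y j)) :=
          mul_le_mul_of_nonneg_left hA1 (by linarith)
        linarith
  · rintro ⟨hpair, -⟩
    have hone : ∀ a b : Fin k, a ≠ b → 1 < lam a → lam b ≤ 1 := by
      intro a b hab h1
      have := hpair a b hab
      linarith
    set v : Fin k → ℝ := fun j => if 1 < lam j then lam j - 1 else 0 with hv
    have hv0 : ∀ j, 0 ≤ v j := by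
      intro j; rw [hv]; dsimp only; split
      · linarith
      · exact le_refl 0
    have hvlam : ∀ j, v j ≤ lam j := by
      intro j; rw [hv]; dsimp only; split
      · linarith
      · exact hlam0 j
    have hwv1 : ∀ j, lam j - v j ≤ 1 := by
      intro j; rw [hv]; dsimp only; split
      · linarith
      · linarith [not_lt.mp (by assumption : ¬ 1 < lam j)]
    set w : Fin k → Finset (Fin (k+1)) → ℝ := fun j R =>
      if R = {j.castSucc} then lam j - v j
      else if R = Finset.univ.erase j.castSucc then v j else 0 with hw
    refine ⟨hlam0, w, ?_, ?_, ?_, ?_⟩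
    · intro j R
      simp only [hw]
      split_ifs
      · linarith [hvlam j]
      · exact hv0 j
      · exact le_refl 0
    · intro j R hnrec
      simp only [hw]
      split_ifs with h1 h2
      · exact (hnrec (by rw [h1]; exact isRecovery_single hsys j)).elim
      · exact (hnrec (by rw [h2]; exact isRecovery_erase hsys hMDS j)).elim
      · rfl
    · intro j
      simp only [hw]
      rw [sum_two_ite (hsingle_ne j) (lam j - v j) (v j)]
      ring
    · intro l
      refine Fin.lastCases ?_ ?_ l
      · have hterm : ∀ j : Fin k,
            ∑ R ∈ Finset.univ.filter (fun R => Fin.last k ∈ R), w j R = v j := by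
          intro j
          simp only [hw]
          rw [sum_two_ite_filter _ (hsingle_ne j) _ _,
            if_neg (fun h => hlastne j (Finset.mem_singleton.mp h)),
            if_pos (hlastmem j), zero_add]
        rw [Finset.sum_congr rfl fun j _ => hterm j]
        by_cases hT : ∃ t, 1 < lam t
        · obtain ⟨t, ht⟩ := hT
          have hvz : ∀ b, b ≠ t → v b = 0 := by
            intro b hb; rw [hv]; dsimp only
            rw [if_neg (not_lt.mpr (hone t b (fun h => hb h.symm) ht))]
          rw [Finset.sum_eq_single_of_mem t (Finset.mem_univ t) (fun b _ hb => hvz b hb)]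
          have hnt : Nontrivial (Fin k) := Fin.nontrivial_iff_two_le.mpr hk
          obtain ⟨s, hs⟩ := exists_ne t
          have hts := hpair t s (fun h => hs h.symm)
          have hs0 := hlam0 s
          rw [hv]; dsimp only; rw [if_pos ht]; linarith
        · push_neg at hT
          have hvz : ∀ j ∈ Finset.univ, v j = 0 := fun j _ => by
            rw [hv]; dsimp only; rw [if_neg (not_lt.mpr (hT j))]
          rw [Finset.sum_congr rfl hvz, Finset.sum_const, smul_zero]
          norm_num
      · intro i
        have hterm : ∀ j : Fin k,
            ∑ R ∈ Finset.univ.filter (fun R => i.castSucc ∈ R), w j R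
              = if j = i then lam i - v i else v j := by
          intro j
          simp only [hw]
          rw [sum_two_ite_filter _ (hsingle_ne j) _ _]
          by_cases hj : j = i
          · subst hj
            rw [if_pos (Finset.mem_singleton.mpr rfl),
              if_neg (fun h => (Finset.mem_erase.mp h).1 rfl), if_pos rfl, add_zero]
          · rw [if_neg (fun h => hj (Fin.castSucc_inj.mp (Finset.mem_singleton.mp h)).symm),
              if_pos (Finset.mem_erase.mpr
                ⟨fun h => hj (Fin.castSucc_inj.mp h).symm, Finset.mem_univ _⟩),
              if_neg hj, zero_add]
        rw [Finset.sum_congr rfl fun j _ => hterm j]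
        have hsp : ∀ j : Fin k, (if j = i then lam i - v i else v j)
            = v j + (if j = i then lam i - 2 * v i else 0) := by
          intro j; by_cases hj : j = i
          · subst hj; rw [if_pos rfl, if_pos rfl]; ring
          · rw [if_neg hj, if_neg hj, add_zero]
        rw [Finset.sum_congr rfl fun j _ => hsp j, Finset.sum_add_distrib,
          Finset.sum_ite_eq' Finset.univ i (fun _ => lam i - 2 * v i),
          if_pos (Finset.mem_univ _)]
        by_cases hT : ∃ t, t ≠ i ∧ 1 < lam t
        · obtain ⟨t, hti, ht⟩ := hT
          have hvz : ∀ b, b ≠ t → v b = 0 := by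
            intro b hb; rw [hv]; dsimp only
            rw [if_neg (not_lt.mpr (hone t b (fun h => hb h.symm) ht))]
          rw [Finset.sum_eq_single_of_mem t (Finset.mem_univ t) (fun b _ hb => hvz b hb)]
          have hvi : v i = 0 := hvz i (fun h => hti h.symm)
          have hvt : v t = lam t - 1 := by rw [hv]; dsimp only; rw [if_pos ht]
          have hit := hpair i t (fun h => hti h.symm)
          rw [hvi, hvt]; linarith
        · push_neg at hT
          have hvz : ∀ b, b ≠ i → v b = 0 := fun b hb => by
            rw [hv]; dsimp only; rw [if_neg (not_lt.mpr (hT b hb))]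
          rw [Finset.sum_eq_single_of_mem i (Finset.mem_univ i) (fun b _ hb => hvz b hb)]
          by_cases hi : 1 < lam i
          · have hvi : v i = lam i - 1 := by rw [hv]; dsimp only; rw [if_pos hi]
            linarith
          · have hvi : v i = 0 := by rw [hv]; dsimp only; rw [if_neg hi]
            linarith [not_lt.mp hi]
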